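/- (Wagner's theorem: dimension of the space spanned by products of defining forms equals T(𝒜;2,1).) Let 𝕜 be a field of characteristic zero and let l_1, …, l_m be nonzero linear forms on 𝕜^d that are pairwise non-proportional (so they define a central hyperplane arrangement 𝒜 of m distinct hyperplanes in 𝕜^d). Consider the subspace C of the polynomial ring 𝕜[x_1,…,x_d] spanned by the products ∏_{i∈B} l_i over all subsets B ⊆ {1,…,m} (with the empty product equal to 1). Then dim_𝕜 C equals the number of subsets B ⊆ {1,…,m} such that the linear forms (l_i)_{i∈B} are linearly independent over 𝕜; this number is the Tutte polynomial evaluation T(𝒜;2,1). -/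
import Mathlib
set_option linter.unusedSectionVars false
set_option linter.unnecessarySimpa false
set_option maxHeartbeats 1000000
open scoped BigOperators
open Module Submodule

section WagnerDev

variable {K : Type} [Field K] {V : Type} [AddCommGroup V] [Module K V]
variable {ι : Type} [Fintype ι] [DecidableEq ι]
variable {M : Type} [AddCommGroup M] [Module K M]




/-- Linear independence of the subfamily indexed by a finset, via coefficients. -/
def IndOn (K : Type) [Field K] {M : Type} [AddCommGroup M] [Module K M]
    (b : ι → M) (S : Finset ι) : Prop :=
  ∀ c : ι → K, ∑ i ∈ S, c i • b i = 0 → ∀ i ∈ S, c i = 0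


lemma mem_span_image_finset_iff {b : ι → M} {S : Finset ι} {x : M} :
    x ∈ span K (b '' ↑S) ↔ ∃ c : ι → K, x = ∑ i ∈ S, c i • b i := by
  constructor
  · intro hx
    refine Submodule.span_induction ?_ ?_ ?_ ?_ hx
    · rintro y ⟨i, hi, rfl⟩
      refine ⟨fun j => if j = i then 1 else 0, ?_⟩
      rw [Finset.sum_eq_single_of_mem i (by simpa using hi)]
      · simp
      · intro j _ hj; simp [hj]
    · exact ⟨0, by simp⟩
    · rintro y z - - ⟨c, rfl⟩ ⟨c', rfl⟩
      exact ⟨c + c', by simp [add_smul, Finset.sum_add_distrib]⟩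
    · rintro t y - ⟨c, rfl⟩
      exact ⟨t • c, by simp [Finset.smul_sum, smul_smul]⟩
  · rintro ⟨c, rfl⟩
    exact Submodule.sum_mem _ fun i hi =>
      Submodule.smul_mem _ _ (Submodule.subset_span ⟨i, by simpa using hi, rfl⟩)

lemma indOn_iff_linearIndependent {b : ι → M} {S : Finset ι} :
    IndOn K b S ↔ LinearIndependent K (fun i : S => b i) := by
  rw [Fintype.linearIndependent_iff]
  constructor
  · intro h g hg
    have hc : ∑ i ∈ S, (fun i => if h : i ∈ S then g ⟨i, h⟩ else 0) i • b i = 0 := by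
      rw [← hg, ← Finset.sum_coe_sort S (fun i => (if h : i ∈ S then g ⟨i, h⟩ else 0) • b i)]
      refine Finset.sum_congr rfl fun i _ => by simp [i.2]
    intro i
    have := h _ hc i i.2
    simpa [i.2] using this
  · intro h c hc i hi
    have hg : ∑ i : S, c i • b i = 0 := by
      rw [Finset.sum_coe_sort S (fun i => c i • b i)]; exact hc
    exact h (fun i : S => c i) hg ⟨i, hi⟩

lemma not_indOn_of_zero {b : ι → M} {S : Finset ι} {e : ι} (he : e ∈ S) (hbe : b e = 0) :
    ¬ IndOn K b S := by
  intro h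
  have := h (fun i => if i = e then 1 else 0) ?_ e he
  · simp at this
  · rw [Finset.sum_eq_single_of_mem e he]
    · simp [hbe]
    · intro j _ hj; simp [hj]

lemma indOn_congr {b b' : ι → M} {S : Finset ι} (h : ∀ i ∈ S, b i = b' i) :
    IndOn K b S ↔ IndOn K b' S := by
  have hs : ∀ c : ι → K, ∑ i ∈ S, c i • b i = ∑ i ∈ S, c i • b' i :=
    fun c => Finset.sum_congr rfl fun i hi => by rw [h i hi]
  constructor <;> intro hI c hc <;> [rw [← hs] at hc; rw [hs] at hc] <;> exact hI c hc

/-- A linear functional vanishing on the kernel of `l` (with `l x₀ = 1`) is a multiple of `l`. -/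
lemma eq_smul_of_vanishing_ker {l φ : Module.Dual K V} {x₀ : V} (h1 : l x₀ = 1)
    (h : ∀ x, l x = 0 → φ x = 0) : φ = φ x₀ • l := by
  ext x
  have hker : l (x - l x • x₀) = 0 := by simp [h1]
  have := h _ hker
  simp only [map_sub, map_smul, smul_eq_mul, sub_eq_zero] at this
  simp [this, LinearMap.smul_apply, smul_eq_mul, mul_comm]

lemma exists_dual_one {l : Module.Dual K V} (hl : l ≠ 0) : ∃ x₀, l x₀ = 1 := by
  have : ∃ x, l x ≠ 0 := by
    by_contra h
    push_neg at h
    exact hl (by ext x; simp [h x])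
  obtain ⟨x, hx⟩ := this
  exact ⟨(l x)⁻¹ • x, by simp [inv_mul_cancel₀ hx]⟩



noncomputable def resK (l : Module.Dual K V) (φ : Module.Dual K V) :
    Module.Dual K (LinearMap.ker l) := φ.domRestrict (LinearMap.ker l)

@[simp] lemma resK_apply (l φ : Module.Dual K V) (w : LinearMap.ker l) :
    resK l φ w = φ w := rfl

@[simp] lemma resK_zero (l : Module.Dual K V) : resK l (0 : Module.Dual K V) = 0 := rfl

lemma resK_self (l : Module.Dual K V) : resK l l = 0 := by
  ext w; simpa using w.2

lemma sum_resK (l : Module.Dual K V) (b : ι → Module.Dual K V) (c : ι → K) (S : Finset ι) :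
    ∑ i ∈ S, c i • resK l (b i) = resK l (∑ i ∈ S, c i • b i) := by
  ext w
  simp only [LinearMap.sum_apply, LinearMap.smul_apply, resK_apply, smul_eq_mul]

lemma resK_eq_zero_iff {l : Module.Dual K V} {x₀ : V} (h1 : l x₀ = 1) {φ : Module.Dual K V} :
    resK l φ = 0 ↔ φ = φ x₀ • l := by
  constructor
  · intro h
    refine eq_smul_of_vanishing_ker h1 (fun x hx => ?_)
    have := congrArg (fun (ψ : Module.Dual K (LinearMap.ker l)) => ψ ⟨x, hx⟩) h
    simpa using this
  · intro h
    ext w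
    have hw : l w = 0 := w.2
    show φ ↑w = 0
    conv_lhs => rw [h]
    simp [LinearMap.smul_apply, hw]

lemma indOn_resK_iff {l : Module.Dual K V} (hl : l ≠ 0) (b : ι → Module.Dual K V)
    (S : Finset ι) :
    IndOn K (fun i => resK l (b i)) S ↔ IndOn K b S ∧ l ∉ span K (b '' ↑S) := by
  obtain ⟨x₀, h1⟩ := exists_dual_one hl
  constructor
  · intro h
    constructor
    · intro c hc i hi
      exact h c (by rw [sum_resK, hc, resK_zero]) i hi
    · intro hmem
      obtain ⟨c, hc⟩ := mem_span_image_finset_iff.mp hmem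
      have h0 : ∑ i ∈ S, c i • resK l (b i) = 0 := by
        rw [sum_resK, ← hc, resK_self]
      have hc0 : ∀ i ∈ S, c i = 0 := h c h0
      exact hl (by rw [hc, Finset.sum_eq_zero (fun i hi => by rw [hc0 i hi, zero_smul])])
  · rintro ⟨hI, hmem⟩ c hc i hi
    have hres : resK l (∑ i ∈ S, c i • b i) = 0 := by rw [← sum_resK]; exact hc
    have hφl : (∑ i ∈ S, c i • b i) = (∑ i ∈ S, c i • b i) x₀ • l := (resK_eq_zero_iff h1).mp hres
    by_cases hκ : (∑ i ∈ S, c i • b i) x₀ = 0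
    · have hz : (∑ i ∈ S, c i • b i) = 0 := by rw [hφl, hκ, zero_smul]
      exact hI c hz i hi
    · exfalso
      apply hmem
      rw [mem_span_image_finset_iff]
      obtain ⟨κ, hκdef⟩ : ∃ κ, (∑ i ∈ S, c i • b i) x₀ = κ := ⟨_, rfl⟩
      rw [hκdef] at hφl hκ
      refine ⟨fun j => κ⁻¹ * c j, ?_⟩
      have hstep : l = κ⁻¹ • (∑ i ∈ S, c i • b i) := by
        rw [hφl, smul_smul, inv_mul_cancel₀ hκ, one_smul]
      rw [hstep, Finset.smul_sum]
      exact Finset.sum_congr rfl fun j _ => by rw [smul_smul]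

lemma indOn_insert_iff_resK {b : ι → Module.Dual K V} {e : ι} {S : Finset ι}
    (he : e ∉ S) (hbe : b e ≠ 0) :
    IndOn K b (insert e S) ↔ IndOn K (fun i => resK (b e) (b i)) S := by
  obtain ⟨x₀, h1⟩ := exists_dual_one hbe
  constructor
  · intro h c hc i hi
    have hres : resK (b e) (∑ i ∈ S, c i • b i) = 0 := by rw [← sum_resK]; exact hc
    have hφl : (∑ i ∈ S, c i • b i) = (∑ i ∈ S, c i • b i) x₀ • b e :=
      (resK_eq_zero_iff h1).mp hres
    have hine : i ≠ e := fun hie => he (by rw [← hie]; exact hi)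
    obtain ⟨κ, hκdef⟩ : ∃ κ, (∑ i ∈ S, c i • b i) x₀ = κ := ⟨_, rfl⟩
    rw [hκdef] at hφl
    have hsum : ∑ j ∈ insert e S, (Function.update c e (-κ)) j • b j
        = 0 := by
      rw [Finset.sum_insert he]
      have h2 : ∑ j ∈ S, (Function.update c e (-κ)) j • b j
          = ∑ j ∈ S, c j • b j := by
        refine Finset.sum_congr rfl fun j hj => ?_
        rw [Function.update_of_ne (fun hje => he (by rw [← hje]; exact hj))]
      rw [h2, Function.update_self, hφl]
      show (-κ) • b e + κ • b e = 0
      have h5 : (-κ) • b e = -(κ • b e) := neg_smul κ (b e)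
      rw [h5, neg_add_cancel]
    have := h _ hsum i (Finset.mem_insert_of_mem hi)
    rwa [Function.update_of_ne hine] at this
  · intro h c hc
    have hres : ∑ i ∈ S, c i • resK (b e) (b i) = 0 := by
      rw [sum_resK]
      have h3 : resK (b e) (∑ i ∈ insert e S, c i • b i) = 0 := by rw [hc, resK_zero]
      rw [Finset.sum_insert he] at h3
      have h2 : resK (b e) (c e • b e + ∑ i ∈ S, c i • b i)
          = c e • resK (b e) (b e) + resK (b e) (∑ i ∈ S, c i • b i) := by
        ext w; simp
      rw [h2, resK_self] at h3
      simpa using h3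
    have hS : ∀ i ∈ S, c i = 0 := h c hres
    have he0 : c e • b e = 0 := by
      have h4 := hc
      rw [Finset.sum_insert he, Finset.sum_eq_zero (fun i hi => by rw [hS i hi, zero_smul]),
        add_zero] at h4
      exact h4
    have hce : c e = 0 := by
      rcases smul_eq_zero.mp he0 with h' | h'
      · exact h'
      · exact absurd h' hbe
    intro i hi
    rcases Finset.mem_insert.mp hi with rfl | hi'
    · exact hce
    · exact hS i hi'



/-- The algebra of "polynomial functions" on `V`: generated by linear functionals. -/
noncomputable def PolyFun (K : Type) [Field K] (V : Type) [AddCommGroup V] [Module K V] :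
    Subalgebra K (V → K) :=
  Algebra.adjoin K (Set.range fun φ : Module.Dual K V => (φ : V → K))

lemma dual_mem_polyFun (φ : Module.Dual K V) : (φ : V → K) ∈ PolyFun K V :=
  Algebra.subset_adjoin ⟨φ, rfl⟩

lemma prod_dual_mem_polyFun {ι : Type} (a : ι → Module.Dual K V) (S : Finset ι) :
    (fun x => ∏ i ∈ S, a i x) ∈ PolyFun K V := by
  have : (fun x => ∏ i ∈ S, a i x) = ∏ i ∈ S, ((a i : V → K)) := by
    funext x; simp
  rw [this]
  exact Subalgebra.prod_mem _ fun i _ => dual_mem_polyFun (a i)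

/-- restriction of a polynomial function to a line is polynomial. -/
lemma polyFun_line {f : V → K} (hf : f ∈ PolyFun K V) (x y : V) :
    ∃ p : Polynomial K, ∀ s : K, f (x + s • y) = p.eval s := by
  induction hf using Algebra.adjoin_induction with
  | mem g hg =>
    obtain ⟨φ, rfl⟩ := hg
    refine ⟨Polynomial.C (φ x) + Polynomial.C (φ y) * Polynomial.X, fun s => ?_⟩
    simp only [map_add, map_smul, smul_eq_mul, Polynomial.eval_add, Polynomial.eval_mul,
      Polynomial.eval_C, Polynomial.eval_X]
    ring
  | algebraMap r => exact ⟨Polynomial.C r, fun s => by simp [Algebra.algebraMap_eq_smul_one]⟩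
  | add g h _ _ hg hh =>
    obtain ⟨p, hp⟩ := hg; obtain ⟨q, hq⟩ := hh
    exact ⟨p + q, fun s => by simp [hp s, hq s]⟩
  | mul g h _ _ hg hh =>
    obtain ⟨p, hp⟩ := hg; obtain ⟨q, hq⟩ := hh
    exact ⟨p * q, fun s => by simp [hp s, hq s]⟩

/-- D1: multiplication by a nonzero linear functional is injective on polynomial functions. -/
lemma polyFun_mul_inj [Infinite K] {l : Module.Dual K V} (hl : l ≠ 0) {f : V → K}
    (hf : f ∈ PolyFun K V) (h : ∀ x, l x * f x = 0) : f = 0 := by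
  obtain ⟨x₀, h1⟩ : ∃ x₀, l x₀ = 1 := by
    have : ∃ x, l x ≠ 0 := by
      by_contra hh; push_neg at hh; exact hl (by ext x; simp [hh x])
    obtain ⟨x, hx⟩ := this
    exact ⟨(l x)⁻¹ • x, by simp [inv_mul_cancel₀ hx]⟩
  funext x
  obtain ⟨p, hp⟩ := polyFun_line hf x x₀
  have hq : ∀ s : K, ((Polynomial.C (l x) + Polynomial.X) * p).eval s = 0 := by
    intro s
    have := h (x + s • x₀)
    simp only [map_add, map_smul, smul_eq_mul, h1, mul_one] at this
    simpa [hp s, mul_comm, add_comm] using this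
  have hzero : (Polynomial.C (l x) + Polynomial.X) * p = 0 := by
    apply Polynomial.funext
    intro s
    simp [hq s]
  have hCX : (Polynomial.C (l x) + Polynomial.X : Polynomial K) ≠ 0 := by
    intro hC
    have := congrArg (Polynomial.coeff · 1) hC
    simp at this
  have hp0 : p = 0 := by
    rcases mul_eq_zero.mp hzero with h' | h'
    · exact absurd h' hCX
    · exact h'
  have := hp 0
  rw [hp0] at this
  simpa using this

/-- decomposition with respect to a hyperplane -/
lemma polyFun_decomp {l : Module.Dual K V} {x₀ : V} (h1 : l x₀ = 1) {f : V → K}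
    (hf : f ∈ PolyFun K V) :
    ∃ g h : V → K, g ∈ PolyFun K V ∧ h ∈ PolyFun K V ∧
      (∀ x, h x = h (x - l x • x₀)) ∧ f = h + (l : V → K) * g := by
  induction hf using Algebra.adjoin_induction with
  | mem g₀ hg₀ =>
    obtain ⟨φ, rfl⟩ := hg₀
    refine ⟨(fun _ => φ x₀), (φ - φ x₀ • l : Module.Dual K V), ?_, dual_mem_polyFun _, ?_, ?_⟩
    · have : (fun _ : V => φ x₀) = (algebraMap K (V → K)) (φ x₀) := rfl
      rw [this]; exact Subalgebra.algebraMap_mem _ _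
    · intro x
      simp [LinearMap.sub_apply, LinearMap.smul_apply, h1, smul_eq_mul]
      ring
    · funext x
      simp [LinearMap.sub_apply, LinearMap.smul_apply, smul_eq_mul]
      ring
  | algebraMap r =>
    refine ⟨0, (algebraMap K (V → K)) r, Subalgebra.zero_mem _, Subalgebra.algebraMap_mem _ _,
      fun x => rfl, by funext x; simp⟩
  | add g₁ g₂ _ _ h₁ h₂ =>
    obtain ⟨ga, ha, hga, hha, hinva, hfa⟩ := h₁
    obtain ⟨gb, hb, hgb, hhb, hinvb, hfb⟩ := h₂
    refine ⟨ga + gb, ha + hb, Subalgebra.add_mem _ hga hgb, Subalgebra.add_mem _ hha hhb, ?_, ?_⟩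
    · intro x; simp [Pi.add_apply, ← hinva x, ← hinvb x]
    · rw [hfa, hfb]; funext x; simp; ring
  | mul g₁ g₂ _ _ h₁ h₂ =>
    obtain ⟨ga, ha, hga, hha, hinva, hfa⟩ := h₁
    obtain ⟨gb, hb, hgb, hhb, hinvb, hfb⟩ := h₂
    refine ⟨ga * hb + ha * gb + (l : V → K) * ga * gb, ha * hb, ?_, Subalgebra.mul_mem _ hha hhb,
      ?_, ?_⟩
    · refine Subalgebra.add_mem _ (Subalgebra.add_mem _ ?_ ?_) ?_
      · exact Subalgebra.mul_mem _ hga hhb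
      · exact Subalgebra.mul_mem _ hha hgb
      · exact Subalgebra.mul_mem _ (Subalgebra.mul_mem _ (dual_mem_polyFun l) hga) hgb
    · intro x; simp [Pi.mul_apply, ← hinva x, ← hinvb x]
    · rw [hfa, hfb]; funext x; simp [Pi.mul_apply, Pi.add_apply]; ring

/-- D2: a polynomial function vanishing on `ker l` is divisible by `l` within `PolyFun`. -/
lemma polyFun_div {l : Module.Dual K V} (hl : l ≠ 0) {f : V → K} (hf : f ∈ PolyFun K V)
    (hvan : ∀ x, l x = 0 → f x = 0) :
    ∃ g, g ∈ PolyFun K V ∧ f = (l : V → K) * g := by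
  obtain ⟨x₀, h1⟩ : ∃ x₀, l x₀ = 1 := by
    have : ∃ x, l x ≠ 0 := by
      by_contra hh; push_neg at hh; exact hl (by ext x; simp [hh x])
    obtain ⟨x, hx⟩ := this
    exact ⟨(l x)⁻¹ • x, by simp [inv_mul_cancel₀ hx]⟩
  obtain ⟨g, h, hg, hh, hinv, hfe⟩ := polyFun_decomp h1 hf
  refine ⟨g, hg, ?_⟩
  have hker : ∀ x : V, l (x - l x • x₀) = 0 := by
    intro x; simp [h1]
  have hh0 : h = 0 := by
    funext x
    have e1 : h x = h (x - l x • x₀) := hinv x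
    have e2 : f (x - l x • x₀) = h (x - l x • x₀) + l (x - l x • x₀) * g (x - l x • x₀) := by
      rw [hfe]; simp
    have e3 : f (x - l x • x₀) = 0 := hvan _ (hker x)
    rw [hker x, zero_mul, add_zero] at e2
    rw [e1, ← e2, e3]; rfl
  rw [hfe, hh0]
  funext x; simp



/-- product function attached to a subset -/
noncomputable def pF (a : ι → Module.Dual K V) (S : Finset ι) : V → K :=
  fun x => ∏ i ∈ S, a i x

/-- span of all subproducts -/
noncomputable def PP (a : ι → Module.Dual K V) : Submodule K (V → K) :=
  span K (Set.range (pF a))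

/-- span of subproducts whose complement spans `l` -/
noncomputable def PG (a : ι → Module.Dual K V) (l : Module.Dual K V) : Submodule K (V → K) :=
  span K (pF a '' {S : Finset ι | l ∈ span K (a '' ↑(Sᶜ))})

/-- multiplication by a functional, as a linear endomorphism of functions -/
noncomputable def mulF (l : Module.Dual K V) : (V → K) →ₗ[K] (V → K) where
  toFun f := fun x => l x * f x
  map_add' f g := by funext x; simp [mul_add]
  map_smul' c f := by funext x; simp [smul_eq_mul]; ring

@[simp] lemma mulF_apply (l : Module.Dual K V) (f : V → K) (x : V) :
    mulF l f x = l x * f x := rfl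

/-- restriction of functions to the kernel of `l` -/
noncomputable def resF (l : Module.Dual K V) : (V → K) →ₗ[K] ((LinearMap.ker l) → K) :=
  LinearMap.funLeft K K (Subtype.val)

@[simp] lemma resF_apply (l : Module.Dual K V) (f : V → K) (w : LinearMap.ker l) :
    resF l f w = f w := rfl

instance PP_fd (a : ι → Module.Dual K V) : FiniteDimensional K (PP a) :=
  FiniteDimensional.span_of_finite K (Set.finite_range _)

instance PG_fd (a : ι → Module.Dual K V) (l : Module.Dual K V) : FiniteDimensional K (PG a l) :=
  FiniteDimensional.span_of_finite K ((Set.finite_range (pF a)).subset (Set.image_subset_range _ _))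

lemma PP_le_polyFun (a : ι → Module.Dual K V) :
    PP a ≤ Subalgebra.toSubmodule (PolyFun K V) := by
  rw [PP, span_le]
  rintro f ⟨S, rfl⟩
  exact prod_dual_mem_polyFun a S

lemma PG_le_PP (a : ι → Module.Dual K V) (l : Module.Dual K V) : PG a l ≤ PP a := by
  rw [PG, span_le]
  rintro f ⟨S, -, rfl⟩
  exact subset_span ⟨S, rfl⟩

lemma pF_mem_PP (a : ι → Module.Dual K V) (S : Finset ι) : pF a S ∈ PP a :=
  subset_span ⟨S, rfl⟩

/-- rank–nullity for a finite-dimensional submodule under a linear map. -/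
lemma rank_nullity_submodule {A B : Type} [AddCommGroup A] [Module K A]
    [AddCommGroup B] [Module K B] (M : Submodule K A) [FiniteDimensional K M]
    (ρ : A →ₗ[K] B) :
    finrank K M = finrank K (M.map ρ) + finrank K (M ⊓ LinearMap.ker ρ : Submodule K A) := by
  have h1 := LinearMap.finrank_range_add_finrank_ker (ρ.domRestrict M)
  have hrange : LinearMap.range (ρ.domRestrict M) = M.map ρ := by
    ext b
    constructor
    · rintro ⟨⟨a, ha⟩, rfl⟩; exact ⟨a, ha, rfl⟩
    · rintro ⟨a, ha, rfl⟩; exact ⟨⟨a, ha⟩, rfl⟩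
  have hker : LinearMap.ker (ρ.domRestrict M) = comap M.subtype (M ⊓ LinearMap.ker ρ) := by
    ext ⟨a, ha⟩
    simp [LinearMap.mem_ker, LinearMap.domRestrict_apply, ha]
  have hkerrank : finrank K (LinearMap.ker (ρ.domRestrict M))
      = finrank K (M ⊓ LinearMap.ker ρ : Submodule K A) := by
    rw [hker]
    exact (Submodule.comapSubtypeEquivOfLe inf_le_left).finrank_eq
  rw [hrange, hkerrank] at h1
  exact h1.symm

/-- image of `PP` under restriction is `PP` of the restricted family. -/
lemma map_resF_PP (a : ι → Module.Dual K V) (l : Module.Dual K V) :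
    (PP a).map (resF l) = PP (fun i => resK l (a i)) := by
  rw [PP, PP, Submodule.map_span, ← Set.range_comp]
  congr 1

/-- everything multiplied by `l` restricts to zero on `ker l` -/
lemma map_mulF_le_ker (l : Module.Dual K V) (M : Submodule K (V → K)) :
    M.map (mulF l) ≤ LinearMap.ker (resF l) := by
  rintro f ⟨g, -, rfl⟩
  ext w
  simp [w.2]

lemma mem_ker_resF_iff {l : Module.Dual K V} {f : V → K} :
    f ∈ LinearMap.ker (resF l) ↔ ∀ x, l x = 0 → f x = 0 := by
  constructor
  · intro h x hx
    have := congrFun (congrArg (fun (g : (LinearMap.ker l) → K) => g) (LinearMap.mem_ker.mp h))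
      ⟨x, hx⟩
    simpa using this
  · intro h
    rw [LinearMap.mem_ker]
    funext w
    exact h w w.2

lemma finrank_map_mulF [Infinite K] {l : Module.Dual K V} (hl : l ≠ 0)
    {M : Submodule K (V → K)} [FiniteDimensional K M]
    (hM : M ≤ Subalgebra.toSubmodule (PolyFun K V)) :
    finrank K (M.map (mulF l)) = finrank K M := by
  have hinj : Function.Injective ((mulF l).domRestrict M) := by
    rw [← LinearMap.ker_eq_bot]
    ext ⟨f, hf⟩
    simp only [LinearMap.mem_ker, LinearMap.domRestrict_apply, Submodule.mem_bot]
    constructor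
    · intro h
      have hf0 : f = 0 := polyFun_mul_inj hl (hM hf) (fun x => congrFun h x)
      exact Subtype.ext hf0
    · intro h0
      have hf0 : f = 0 := congrArg Subtype.val h0
      subst hf0
      simp
  have h2 := LinearMap.finrank_range_of_inj hinj
  have hrange : LinearMap.range ((mulF l).domRestrict M) = M.map (mulF l) := by
    ext b
    constructor
    · rintro ⟨⟨g, hg⟩, rfl⟩; exact ⟨g, hg, rfl⟩
    · rintro ⟨g, hg, rfl⟩; exact ⟨⟨g, hg⟩, rfl⟩
  rw [hrange] at h2
  exact h2

/-- Lemma A: if `l` is spanned by the complementary forms, `l·p_S` stays in the span. -/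
lemma mulF_pF_mem (a : ι → Module.Dual K V) (l : Module.Dual K V) (S : Finset ι)
    (h : l ∈ span K (a '' ↑(Sᶜ))) : mulF l (pF a S) ∈ PP a := by
  obtain ⟨c, hc⟩ := mem_span_image_finset_iff.mp h
  have hfun : mulF l (pF a S) = ∑ j ∈ Sᶜ, c j • pF a (insert j S) := by
    funext x
    have hx : l x = ∑ j ∈ Sᶜ, c j * a j x := by
      rw [hc]; simp
    simp only [mulF_apply, Finset.sum_apply, Pi.smul_apply, smul_eq_mul, pF]
    rw [hx, Finset.sum_mul]
    refine Finset.sum_congr rfl fun j hj => ?_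
    have hjS : j ∉ S := Finset.mem_compl.mp hj
    rw [Finset.prod_insert hjS]
    ring
  rw [hfun]
  exact Submodule.sum_mem _ fun j _ => Submodule.smul_mem _ _ (pF_mem_PP a _)



/-- split a subtype count along a predicate -/
lemma nat_card_split (P Q : Finset ι → Prop) :
    Nat.card {S : Finset ι // P S}
      = Nat.card {S : Finset ι // P S ∧ Q S} + Nat.card {S : Finset ι // P S ∧ ¬ Q S} := by
  classical
  rw [← Nat.card_sum]
  refine Nat.card_congr ?_
  exact (((Equiv.subtypeSubtypeEquivSubtypeInter P Q).symm.sumCongr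
    (Equiv.subtypeSubtypeEquivSubtypeInter P (¬ Q ·)).symm).trans
    (Equiv.sumCompl (fun S : {S : Finset ι // P S} => Q S.1))).symm

lemma nat_card_iff_congr {P Q : Finset ι → Prop} (h : ∀ S, P S ↔ Q S) :
    Nat.card {S : Finset ι // P S} = Nat.card {S : Finset ι // Q S} :=
  Nat.card_congr (Equiv.subtypeEquivRight h)

/-- erase/insert bijection between counts -/
lemma nat_card_erase (P Q : Finset ι → Prop) (e : ι)
    (h : ∀ S, e ∉ S → (P (insert e S) ↔ Q S)) :
    Nat.card {S : Finset ι // P S ∧ e ∈ S} = Nat.card {S : Finset ι // Q S ∧ e ∉ S} := by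
  refine Nat.card_congr ?_
  refine Equiv.mk
    (fun x => ⟨x.1.erase e, by
      have h1 := (h (x.1.erase e) (Finset.notMem_erase e x.1))
      rw [Finset.insert_erase x.2.2] at h1
      exact ⟨h1.mp x.2.1, Finset.notMem_erase e x.1⟩⟩)
    (fun x => ⟨insert e x.1, ⟨(h x.1 x.2.2).mpr x.2.1, Finset.mem_insert_self e x.1⟩⟩)
    ?_ ?_
  · rintro ⟨S, hP, he⟩
    exact Subtype.ext (Finset.insert_erase he)
  · rintro ⟨S, hQ, he⟩
    exact Subtype.ext (Finset.erase_insert he)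

/-- counting bound via injection on subtypes of finsets -/
lemma nat_card_le_of_imp {P Q : Finset ι → Prop} (h : ∀ S, P S → Q S) :
    Nat.card {S : Finset ι // P S} ≤ Nat.card {S : Finset ι // Q S} :=
  Nat.card_le_card_of_injective (fun x => ⟨x.1, h x.1 x.2⟩) (by
    rintro ⟨S, hS⟩ ⟨T, hT⟩ hxy
    exact Subtype.ext (congrArg Subtype.val hxy : S = T))

lemma nat_card_erase_le (P Q : Finset ι → Prop) (e : ι)
    (h : ∀ S, e ∉ S → P (insert e S) → Q S) :
    Nat.card {S : Finset ι // P S ∧ e ∈ S} ≤ Nat.card {S : Finset ι // Q S} := by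
  refine Nat.card_le_card_of_injective
    (fun x => ⟨x.1.erase e, by
      have h1 := h (x.1.erase e) (Finset.notMem_erase e x.1)
      rw [Finset.insert_erase x.2.2] at h1
      exact h1 x.2.1⟩) ?_
  rintro ⟨S, hS⟩ ⟨T, hT⟩ hxy
  have h2 : S.erase e = T.erase e := congrArg Subtype.val hxy
  apply Subtype.ext
  show S = T
  rw [← Finset.insert_erase hS.2, ← Finset.insert_erase hT.2, h2]


end WagnerDev

section Big
variable {K : Type} [Field K] [Infinite K] {V : Type} [AddCommGroup V] [Module K V]
variable {ι : Type} [Fintype ι] [DecidableEq ι]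

lemma pF_empty (a : ι → Module.Dual K V) : pF a ∅ = (fun _ => (1 : K)) := by
  funext x; simp [pF]

lemma pF_zero_factor {a : ι → Module.Dual K V} {e : ι} {S : Finset ι} (he : e ∈ S)
    (h : a e = 0) : pF a S = 0 := by
  funext x
  exact Finset.prod_eq_zero he (by rw [h]; rfl)

lemma pF_congr {a b : ι → Module.Dual K V} {S : Finset ι} (h : ∀ i ∈ S, a i = b i) :
    pF a S = pF b S := by
  funext x
  exact Finset.prod_congr rfl fun i hi => by rw [h i hi]

lemma mulF_pF_insert {a b : ι → Module.Dual K V} {e : ι} {S : Finset ι} (he : e ∉ S)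
    (h : ∀ i ∈ S, b i = a i) : mulF (a e) (pF b S) = pF a (insert e S) := by
  funext x
  simp only [mulF_apply, pF, Finset.prod_insert he]
  congr 1
  exact Finset.prod_congr rfl fun i hi => by rw [h i hi]

lemma resF_pF (l : Module.Dual K V) (a : ι → Module.Dual K V) (S : Finset ι) :
    resF l (pF a S) = pF (fun i => resK l (a i)) S := rfl

/-- measure decrease helper -/
lemma measure_lt {W : Type} [AddCommGroup W] [Module K W]
    {a : ι → Module.Dual K V} {b : ι → Module.Dual K W} {e : ι}
    (h0 : b e = 0) (hsub : ∀ i, b i ≠ 0 → a i ≠ 0) (he : a e ≠ 0) :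
    ({i | b i ≠ 0}).ncard < ({i | a i ≠ 0}).ncard := by
  apply Set.ncard_lt_ncard
  · constructor
    · intro i hi; exact hsub i hi
    · intro hAB
      exact (hAB he) h0
  · exact Set.toFinite _

/-- the all-zero case of the main theorem -/
lemma PP_all_zero {a : ι → Module.Dual K V} (ha : ∀ i, a i = 0) :
    PP a = span K {(fun _ => (1 : K) : V → K)} := by
  apply le_antisymm
  · rw [PP, span_le]
    rintro f ⟨S, rfl⟩
    rcases S.eq_empty_or_nonempty with rfl | ⟨e, he⟩
    · rw [pF_empty]; exact subset_span rfl
    · rw [pF_zero_factor he (ha e)]; exact Submodule.zero_mem _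
  · rw [span_le]
    rintro f rfl
    rw [← pF_empty a]
    exact pF_mem_PP a ∅

lemma one_ne_zero_fun : (fun _ => (1 : K) : V → K) ≠ 0 := by
  intro h
  have := congrFun h 0
  simp at this

lemma indOn_all_zero_iff {a : ι → Module.Dual K V} (ha : ∀ i, a i = 0) (S : Finset ι) :
    IndOn K a S ↔ S = ∅ := by
  constructor
  · intro h
    by_contra hne
    obtain ⟨e, he⟩ := Finset.nonempty_iff_ne_empty.mpr hne
    exact not_indOn_of_zero he (ha e) h
  · rintro rfl
    intro c _ i hi
    exact absurd hi (Finset.notMem_empty i)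

lemma nat_card_empty_subtype : Nat.card {S : Finset ι // S = ∅} = 1 := by
  haveI : Unique {S : Finset ι // S = ∅} :=
    ⟨⟨⟨∅, rfl⟩⟩, fun ⟨S, h⟩ => Subtype.ext h⟩
  exact Nat.card_unique

lemma nat_card_zero_of_not {P : Finset ι → Prop} (h : ∀ S, ¬ P S) :
    Nat.card {S : Finset ι // P S} = 0 := by
  haveI : IsEmpty {S : Finset ι // P S} := ⟨fun x => h x.1 x.2⟩
  exact Nat.card_of_isEmpty

lemma main_all_zero {a : ι → Module.Dual K V} (ha : ∀ i, a i = 0) :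
    finrank K (PP a) = Nat.card {S : Finset ι // IndOn K a S} := by
  rw [PP_all_zero ha, finrank_span_singleton one_ne_zero_fun,
    nat_card_iff_congr (indOn_all_zero_iff ha), nat_card_empty_subtype]

lemma span_image_zero {a : ι → Module.Dual K V} (ha : ∀ i, a i = 0) (S : Finset ι) :
    span K (a '' ↑S) ≤ ⊥ := by
  rw [span_le]
  rintro φ ⟨i, -, rfl⟩
  simp [ha i]

lemma lemB_all_zero {a : ι → Module.Dual K V} (ha : ∀ i, a i = 0) (l : Module.Dual K V) :
    Nat.card {S : Finset ι // IndOn K a S ∧ l ∈ span K (a '' ↑S)} ≤ finrank K (PG a l) := by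
  by_cases hl : l = 0
  · subst hl
    have hcount : Nat.card {S : Finset ι // IndOn K a S ∧ (0:Module.Dual K V) ∈ span K (a '' ↑S)}
        = 1 := by
      rw [nat_card_iff_congr (fun S => ?_), nat_card_empty_subtype]
      constructor
      · rintro ⟨h, -⟩; exact (indOn_all_zero_iff ha S).mp h
      · rintro rfl; exact ⟨(indOn_all_zero_iff ha ∅).mpr rfl, Submodule.zero_mem _⟩
    rw [hcount]
    have h1 : (fun _ => (1:K) : V → K) ∈ PG a 0 := by
      rw [← pF_empty a]
      exact subset_span ⟨∅,
        show (0:Module.Dual K V) ∈ span K (a '' ↑((∅:Finset ι)ᶜ)) from Submodule.zero_mem _, rfl⟩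
    have : 0 < finrank K (PG a 0) := by
      rw [Module.finrank_pos_iff_exists_ne_zero]
      exact ⟨⟨_, h1⟩, fun hc => one_ne_zero_fun (congrArg Subtype.val hc)⟩
    omega
  · have : ∀ S : Finset ι, ¬ (IndOn K a S ∧ l ∈ span K (a '' ↑S)) := by
      rintro S ⟨-, hmem⟩
      exact hl (Submodule.mem_bot K |>.mp (span_image_zero ha S hmem))
    rw [nat_card_zero_of_not this]
    exact Nat.zero_le _

end Big

section LemB
variable {K : Type} [Field K] [Infinite K]
variable {ι : Type} [Fintype ι] [DecidableEq ι]

lemma all_zero_of_ncard_le_zero {V : Type} [AddCommGroup V] [Module K V]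
    {a : ι → Module.Dual K V} (hm : ({i | a i ≠ 0}).ncard ≤ 0) : ∀ i, a i = 0 := by
  have h0 : {i | a i ≠ 0} = ∅ :=
    (Set.ncard_eq_zero (Set.toFinite _)).mp (Nat.le_zero.mp hm)
  intro i
  by_contra hi
  exact (Set.eq_empty_iff_forall_notMem.mp h0 i) hi

/-- Lemma B : lower bound for the span of products over sets whose complement spans `l`. -/
theorem lemB_aux (n : ℕ) :
    ∀ {V : Type} [AddCommGroup V] [Module K V] (a : ι → Module.Dual K V)
      (l : Module.Dual K V), ({i | a i ≠ 0}).ncard ≤ n →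
      Nat.card {S : Finset ι // IndOn K a S ∧ l ∈ span K (a '' ↑S)} ≤ finrank K (PG a l) := by
  induction n with
  | zero =>
    intro V _ _ a l hm
    exact lemB_all_zero (all_zero_of_ncard_le_zero hm) l
  | succ n IH =>
    intro V _ _ a l hm
    by_cases hz : ∀ i, a i = 0
    · exact lemB_all_zero hz l
    push_neg at hz
    obtain ⟨e, he⟩ := hz
    have ha'e : Function.update a e 0 e = 0 := Function.update_self e 0 a
    have ha'ne : ∀ i, i ≠ e → Function.update a e 0 i = a i :=
      fun i hi => Function.update_of_ne hi 0 a
    have hres_self : resK (a e) (a e) = 0 := resK_self (a e)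
    -- measures
    have hma : ({i | (fun j => resK (a e) (a j)) i ≠ 0}).ncard ≤ n := by
      have h5 := measure_lt (K := K) (a := a) (b := fun i => resK (a e) (a i)) hres_self
        (fun i hi => fun hc => hi (by show resK (a e) (a i) = 0; rw [hc]; exact resK_zero _)) he
      exact Nat.lt_succ_iff.mp (lt_of_lt_of_le h5 hm)
    have hma' : ({i | Function.update a e 0 i ≠ 0}).ncard ≤ n := by
      have h5 := measure_lt (K := K) (a := a) (b := Function.update a e 0) ha'e
        (fun i hi => fun hc => by
          rcases eq_or_ne i e with rfl | hne
          · exact hi ha'e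
          · exact hi (by rw [ha'ne i hne, hc])) he
      exact Nat.lt_succ_iff.mp (lt_of_lt_of_le h5 hm)
    -- counting part
    have hcount : Nat.card {S : Finset ι // IndOn K a S ∧ l ∈ span K (a '' ↑S)}
        ≤ Nat.card {S : Finset ι // IndOn K (fun i => resK (a e) (a i)) S ∧
            resK (a e) l ∈ span K ((fun i => resK (a e) (a i)) '' ↑S)}
          + Nat.card {S : Finset ι // IndOn K (Function.update a e 0) S ∧
            l ∈ span K (Function.update a e 0 '' ↑S)} := by
      rw [nat_card_split (fun S => IndOn K a S ∧ l ∈ span K (a '' ↑S)) (fun S => e ∈ S)]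
      gcongr
      · refine nat_card_erase_le _ _ e (fun S heS hIns => ?_)
        constructor
        · exact (indOn_insert_iff_resK heS he).mp hIns.1
        · obtain ⟨c, hc⟩ := mem_span_image_finset_iff.mp hIns.2
          rw [mem_span_image_finset_iff]
          refine ⟨c, ?_⟩
          have h2 : resK (a e) l = resK (a e) (∑ i ∈ insert e S, c i • a i) := by rw [← hc]
          rw [h2, ← sum_resK, Finset.sum_insert heS]
          show _ = ∑ i ∈ S, c i • resK (a e) (a i)
          rw [hres_self, smul_zero, zero_add]
      · refine nat_card_le_of_imp (fun S hS => ?_)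
        obtain ⟨⟨hInd, hsp⟩, heS⟩ := hS
        have himg : a '' ↑S = Function.update a e 0 '' ↑S :=
          Set.image_congr (fun i hi => (ha'ne i (fun hie => heS (hie ▸ hi))).symm)
        exact ⟨(indOn_congr (fun i hi => (ha'ne i (fun hie => heS (hie ▸ hi))).symm)).mp hInd,
          himg ▸ hsp⟩
    -- geometric part
    haveI : FiniteDimensional K ((PG a l).map (resF (a e))) := Module.Finite.map _ _
    have hrn := rank_nullity_submodule (PG a l) (resF (a e))
    -- part 1 : contraction
    have hpart1 : PG (fun i => resK (a e) (a i)) (resK (a e) l)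
        ≤ (PG a l).map (resF (a e)) := by
      rw [PG, span_le]
      rintro f ⟨S, hS, rfl⟩
      by_cases heS : e ∈ S
      · rw [pF_zero_factor heS hres_self]
        exact Submodule.zero_mem _
      · obtain ⟨c, hc⟩ := mem_span_image_finset_iff.mp hS
        obtain ⟨x₀, hx₀⟩ := exists_dual_one he
        have hres0 : resK (a e) (l - ∑ j ∈ Sᶜ, c j • a j) = 0 := by
          have hsub : resK (a e) (l - ∑ j ∈ Sᶜ, c j • a j)
              = resK (a e) l - resK (a e) (∑ j ∈ Sᶜ, c j • a j) := by
            ext w; simp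
          rw [hsub, ← sum_resK, ← hc, sub_self]
        have hκ := (resK_eq_zero_iff hx₀).mp hres0
        have hlmem : l ∈ span K (a '' ↑(Sᶜ)) := by
          rw [mem_span_image_finset_iff]
          have heSc : e ∈ Sᶜ := Finset.mem_compl.mpr heS
          refine ⟨Function.update c e (c e + (l - ∑ j ∈ Sᶜ, c j • a j) x₀), ?_⟩
          have key : ∑ j ∈ Sᶜ, Function.update c e (c e + (l - ∑ j ∈ Sᶜ, c j • a j) x₀) j • a j
              = (c e + (l - ∑ j ∈ Sᶜ, c j • a j) x₀) • a e + ∑ j ∈ Sᶜ.erase e, c j • a j := by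
            rw [← Finset.add_sum_erase _ _ heSc, Function.update_self]
            congr 1
            exact Finset.sum_congr rfl (fun j hj => by
              rw [Function.update_of_ne (Finset.ne_of_mem_erase hj)])
          have hrest : ∑ j ∈ Sᶜ.erase e, c j • a j = (∑ j ∈ Sᶜ, c j • a j) - c e • a e := by
            rw [← Finset.add_sum_erase _ _ heSc]; abel
          rw [key, hrest, add_smul, ← hκ]
          abel
        exact Submodule.mem_map.mpr ⟨pF a S, subset_span ⟨S, hlmem, rfl⟩, rfl⟩
    -- part 2 : deletion
    have hpart2 : (PG (Function.update a e 0) l).map (mulF (a e))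
        ≤ PG a l ⊓ LinearMap.ker (resF (a e)) := by
      rw [PG, Submodule.map_span, span_le]
      rintro f ⟨g, ⟨S, hS, rfl⟩, rfl⟩
      refine ⟨?_, map_mulF_le_ker (a e) (PG (Function.update a e 0) l)
        ⟨pF (Function.update a e 0) S, subset_span ⟨S, hS, rfl⟩, rfl⟩⟩
      by_cases heS : e ∈ S
      · rw [pF_zero_factor heS ha'e, map_zero]
        exact Submodule.zero_mem _
      · rw [mulF_pF_insert heS (fun i hi => ha'ne i (fun hie => heS (hie ▸ hi)))]
        refine subset_span ⟨insert e S, ?_, rfl⟩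
        show l ∈ span K (a '' ↑((insert e S)ᶜ))
        rw [Finset.compl_insert]
        have heSc : e ∈ Sᶜ := Finset.mem_compl.mpr heS
        obtain ⟨c, hc⟩ := mem_span_image_finset_iff.mp hS
        rw [mem_span_image_finset_iff]
        refine ⟨c, ?_⟩
        rw [hc, ← Finset.add_sum_erase _ _ heSc, ha'e, smul_zero, zero_add]
        exact Finset.sum_congr rfl (fun j hj => by
          rw [ha'ne j (Finset.ne_of_mem_erase hj)])
    -- assemble
    calc Nat.card {S : Finset ι // IndOn K a S ∧ l ∈ span K (a '' ↑S)}
        ≤ Nat.card {S : Finset ι // IndOn K (fun i => resK (a e) (a i)) S ∧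
            resK (a e) l ∈ span K ((fun i => resK (a e) (a i)) '' ↑S)}
          + Nat.card {S : Finset ι // IndOn K (Function.update a e 0) S ∧
            l ∈ span K (Function.update a e 0 '' ↑S)} := hcount
      _ ≤ finrank K (PG (fun i => resK (a e) (a i)) (resK (a e) l))
          + finrank K (PG (Function.update a e 0) l) := by
          gcongr
          · exact IH _ _ hma
          · exact IH _ _ hma'
      _ ≤ finrank K ((PG a l).map (resF (a e)))
          + finrank K (PG a l ⊓ LinearMap.ker (resF (a e)) : Submodule K (V → K)) := by
          haveI : FiniteDimensional K
              (PG a l ⊓ LinearMap.ker (resF (a e)) : Submodule K (V → K)) :=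
            Submodule.finiteDimensional_of_le inf_le_left
          gcongr
          · exact Submodule.finrank_mono hpart1
          · calc finrank K (PG (Function.update a e 0) l)
                = finrank K ((PG (Function.update a e 0) l).map (mulF (a e))) := by
                  rw [finrank_map_mulF he (le_trans (PG_le_PP _ l) (PP_le_polyFun _))]
              _ ≤ _ := Submodule.finrank_mono hpart2
      _ = finrank K (PG a l) := hrn.symm
end LemB

section MainThm
variable {K : Type} [Field K] [Infinite K]
variable {ι : Type} [Fintype ι] [DecidableEq ι]

lemma PP_split {V : Type} [AddCommGroup V] [Module K V] (a : ι → Module.Dual K V) (e : ι) :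
    PP a = PP (Function.update a e 0) ⊔ (PP (Function.update a e 0)).map (mulF (a e)) := by
  have ha'e : Function.update a e 0 e = 0 := Function.update_self e 0 a
  have ha'ne : ∀ i, i ≠ e → Function.update a e 0 i = a i :=
    fun i hi => Function.update_of_ne hi 0 a
  apply le_antisymm
  · rw [PP, span_le]
    rintro f ⟨S, rfl⟩
    by_cases heS : e ∈ S
    · apply Submodule.mem_sup_right
      refine ⟨pF (Function.update a e 0) (S.erase e), pF_mem_PP _ _, ?_⟩
      rw [mulF_pF_insert (Finset.notMem_erase e S)
        (fun i hi => ha'ne i (Finset.ne_of_mem_erase hi)), Finset.insert_erase heS]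
    · rw [pF_congr (fun i hi => (ha'ne i (fun hie => heS (hie ▸ hi))).symm)]
      exact Submodule.mem_sup_left (pF_mem_PP _ _)
  · apply sup_le
    · rw [PP, span_le]
      rintro f ⟨S, rfl⟩
      by_cases heS : e ∈ S
      · rw [pF_zero_factor heS ha'e]
        exact Submodule.zero_mem _
      · rw [pF_congr (fun i hi => ha'ne i (fun hie => heS (hie ▸ hi)))]
        exact pF_mem_PP _ _
    · rw [PP, Submodule.map_span, span_le]
      rintro f ⟨g, ⟨S, rfl⟩, rfl⟩
      by_cases heS : e ∈ S
      · rw [pF_zero_factor heS ha'e, map_zero]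
        exact Submodule.zero_mem _
      · rw [mulF_pF_insert heS (fun i hi => ha'ne i (fun hie => heS (hie ▸ hi)))]
        exact pF_mem_PP _ _

/-- **Main induction**: the dimension of the span of subproducts equals the number of
independent subsets. -/
theorem main_aux (n : ℕ) :
    ∀ {V : Type} [AddCommGroup V] [Module K V] (a : ι → Module.Dual K V),
      ({i | a i ≠ 0}).ncard ≤ n →
      finrank K (PP a) = Nat.card {S : Finset ι // IndOn K a S} := by
  induction n with
  | zero =>
    intro V _ _ a hm
    exact main_all_zero (all_zero_of_ncard_le_zero hm)
  | succ n IH =>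
    intro V _ _ a hm
    by_cases hz : ∀ i, a i = 0
    · exact main_all_zero hz
    push_neg at hz
    obtain ⟨e, he⟩ := hz
    have ha'e : Function.update a e 0 e = 0 := Function.update_self e 0 a
    have ha'ne : ∀ i, i ≠ e → Function.update a e 0 i = a i :=
      fun i hi => Function.update_of_ne hi 0 a
    have hres_self : resK (a e) (a e) = 0 := resK_self (a e)
    -- measures
    have hma : ({i | (fun j => resK (a e) (a j)) i ≠ 0}).ncard ≤ n := by
      have h5 := measure_lt (K := K) (a := a) (b := fun i => resK (a e) (a i)) hres_self
        (fun i hi => fun hc => hi (by show resK (a e) (a i) = 0; rw [hc]; exact resK_zero _)) he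
      exact Nat.lt_succ_iff.mp (lt_of_lt_of_le h5 hm)
    have hma' : ({i | Function.update a e 0 i ≠ 0}).ncard ≤ n := by
      have h5 := measure_lt (K := K) (a := a) (b := Function.update a e 0) ha'e
        (fun i hi => fun hc => by
          rcases eq_or_ne i e with rfl | hne
          · exact hi ha'e
          · exact hi (by rw [ha'ne i hne, hc])) he
      exact Nat.lt_succ_iff.mp (lt_of_lt_of_le h5 hm)
    have hub : ∀ i, a i = 0 → resK (a e) (Function.update a e 0 i) = 0 := by
      intro i hc
      rcases eq_or_ne i e with rfl | hne
      · rw [ha'e]; exact resK_zero _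
      · rw [ha'ne i hne, hc]; exact resK_zero _
    have hma'' : ({i | (fun j => resK (a e) (Function.update a e 0 j)) i ≠ 0}).ncard ≤ n := by
      have h5 := measure_lt (K := K) (a := a)
        (b := fun i => resK (a e) (Function.update a e 0 i))
        (show resK (a e) (Function.update a e 0 e) = 0 by rw [ha'e]; exact resK_zero _)
        (fun i hi => fun hc => hi (hub i hc)) he
      exact Nat.lt_succ_iff.mp (lt_of_lt_of_le h5 hm)
    -- counting
    have hsplit : Nat.card {S : Finset ι // IndOn K a S}
        = Nat.card {S : Finset ι // IndOn K (fun j => resK (a e) (a j)) S}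
          + Nat.card {S : Finset ι // IndOn K (Function.update a e 0) S} := by
      rw [nat_card_split (IndOn K a) (fun S => e ∈ S)]
      congr 1
      · rw [nat_card_erase (fun S => IndOn K a S) (fun S => IndOn K (fun j => resK (a e) (a j)) S)
          e (fun S heS => indOn_insert_iff_resK heS he)]
        rw [nat_card_split (IndOn K (fun j => resK (a e) (a j))) (fun S => e ∈ S)]
        rw [nat_card_zero_of_not (P := fun S => IndOn K (fun j => resK (a e) (a j)) S ∧ e ∈ S)
          (fun S hS => not_indOn_of_zero hS.2 hres_self hS.1)]
        omega
      · rw [nat_card_split (IndOn K (Function.update a e 0)) (fun S => e ∈ S)]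
        rw [nat_card_zero_of_not (P := fun S => IndOn K (Function.update a e 0) S ∧ e ∈ S)
          (fun S hS => not_indOn_of_zero hS.2 ha'e hS.1)]
        rw [Nat.zero_add]
        exact nat_card_iff_congr (fun S => by
          constructor
          · rintro ⟨hI, heS⟩
            exact ⟨(indOn_congr (fun i hi => (ha'ne i (fun hie => heS (hie ▸ hi))).symm)).mp hI,
              heS⟩
          · rintro ⟨hI, heS⟩
            exact ⟨(indOn_congr (fun i hi => ha'ne i (fun hie => heS (hie ▸ hi)))).mp hI, heS⟩)
    -- the count of independent sets spanning a e among the deleted configuration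
    have hsplit' : Nat.card {S : Finset ι // IndOn K (Function.update a e 0) S}
        = Nat.card {S : Finset ι // IndOn K (Function.update a e 0) S
            ∧ a e ∈ span K (Function.update a e 0 '' ↑S)}
          + Nat.card {S : Finset ι // IndOn K (fun j => resK (a e) (Function.update a e 0 j)) S}
        := by
      rw [nat_card_split (IndOn K (Function.update a e 0))
        (fun S => a e ∈ span K (Function.update a e 0 '' ↑S))]
      congr 1
      exact nat_card_iff_congr (fun S => (indOn_resK_iff he (Function.update a e 0) S).symm)
    -- rank computations
    have hrnPP := rank_nullity_submodule (PP a) (resF (a e))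
    have hrnPP' := rank_nullity_submodule (PP (Function.update a e 0)) (resF (a e))
    rw [map_resF_PP a (a e)] at hrnPP
    rw [map_resF_PP (Function.update a e 0) (a e)] at hrnPP'
    have hIH1 : finrank K (PP (fun j => resK (a e) (a j)))
        = Nat.card {S : Finset ι // IndOn K (fun j => resK (a e) (a j)) S} := IH _ hma
    have hIH2 : finrank K (PP (Function.update a e 0))
        = Nat.card {S : Finset ι // IndOn K (Function.update a e 0) S} := IH _ hma'
    have hIH3 : finrank K (PP (fun j => resK (a e) (Function.update a e 0 j)))
        = Nat.card {S : Finset ι // IndOn K (fun j => resK (a e) (Function.update a e 0 j)) S}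
        := IH _ hma''
    -- the kernel within PP a'
    have hker' : finrank K
        (PP (Function.update a e 0) ⊓ LinearMap.ker (resF (a e)) : Submodule K (V → K))
        = Nat.card {S : Finset ι // IndOn K (Function.update a e 0) S
            ∧ a e ∈ span K (Function.update a e 0 '' ↑S)} := by
      omega
    -- inclusion of the multiplied PG into the kernel part
    have hincl : (PG (Function.update a e 0) (a e)).map (mulF (a e))
        ≤ PP (Function.update a e 0) ⊓ LinearMap.ker (resF (a e)) := by
      rw [PG, Submodule.map_span, span_le]
      rintro f ⟨g, ⟨S, hS, rfl⟩, rfl⟩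
      exact ⟨mulF_pF_mem (Function.update a e 0) (a e) S hS,
        map_mulF_le_ker (a e) (PG (Function.update a e 0) (a e))
          ⟨pF (Function.update a e 0) S, subset_span ⟨S, hS, rfl⟩, rfl⟩⟩
    -- lower bound from Lemma B
    have hlb : finrank K
        (PP (Function.update a e 0) ⊓ LinearMap.ker (resF (a e)) : Submodule K (V → K))
        ≤ finrank K ((PG (Function.update a e 0) (a e)).map (mulF (a e))) := by
      rw [finrank_map_mulF he (le_trans (PG_le_PP _ _) (PP_le_polyFun _)), hker']
      exact lemB_aux n (Function.update a e 0) (a e) hma'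
    haveI : FiniteDimensional K
        (PP (Function.update a e 0) ⊓ LinearMap.ker (resF (a e)) : Submodule K (V → K)) :=
      Submodule.finiteDimensional_of_le inf_le_left
    have heq : (PG (Function.update a e 0) (a e)).map (mulF (a e))
        = PP (Function.update a e 0) ⊓ LinearMap.ker (resF (a e)) :=
      Submodule.eq_of_le_of_finrank_le hincl hlb
    -- the kernel within PP a
    have hkera : PP a ⊓ LinearMap.ker (resF (a e))
        = (PP (Function.update a e 0)).map (mulF (a e)) := by
      rw [PP_split a e, sup_comm, sup_inf_assoc_of_le _ (map_mulF_le_ker (a e) _), ← heq]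
      rw [sup_eq_left.mpr]
      exact Submodule.map_mono (PG_le_PP _ _)
    have hfr_mul : finrank K ((PP (Function.update a e 0)).map (mulF (a e)))
        = finrank K (PP (Function.update a e 0)) :=
      finrank_map_mulF he (PP_le_polyFun _)
    rw [hkera] at hrnPP
    omega
end MainThm

section Bridge
variable {K : Type} [Field K]

/-- the coordinate functional attached to a coefficient vector -/
noncomputable def coordDual (d : ℕ) : (Fin d → K) →ₗ[K] Module.Dual K (Fin d → K) where
  toFun v := ∑ j, v j • (LinearMap.proj j : (Fin d → K) →ₗ[K] K)
  map_add' u v := by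
    simp only [Pi.add_apply, add_smul]
    rw [Finset.sum_add_distrib]
  map_smul' c v := by
    simp only [Pi.smul_apply, smul_eq_mul, RingHom.id_apply]
    rw [Finset.smul_sum]
    exact Finset.sum_congr rfl fun j _ => by rw [mul_smul]

lemma coordDual_apply {d : ℕ} (v : Fin d → K) (x : Fin d → K) :
    coordDual d v x = ∑ j, v j * x j := by
  simp [coordDual]

lemma coordDual_ker {d : ℕ} : LinearMap.ker (coordDual d (K := K)) = ⊥ := by
  rw [LinearMap.ker_eq_bot']
  intro v hv
  funext j
  have := congrArg (fun φ : Module.Dual K (Fin d → K) => φ (Pi.single j 1)) hv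
  simp only [LinearMap.zero_apply] at this
  rw [coordDual_apply] at this
  rw [Finset.sum_eq_single j (fun j' _ hj' => by simp [Pi.single_apply, hj'])
    (by simp)] at this
  simpa using this

/-- evaluation of multivariate polynomials, as a linear map into functions -/
noncomputable def evalL (d : ℕ) : MvPolynomial (Fin d) K →ₗ[K] ((Fin d → K) → K) where
  toFun p := fun x => MvPolynomial.eval x p
  map_add' p q := by funext x; simp
  map_smul' c p := by funext x; simp [MvPolynomial.smul_eval]

end Bridge

/-- **Wagner's theorem.** Let `K` be a field of characteristic zero and let `l_1, …, l_m` be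
nonzero, pairwise non-proportional linear forms on `K^d`, given by their coefficient vectors
`v i` (so `l_i = Σ_j v i j · x_j`).  The subspace of `K[x_1,…,x_d]` spanned by the products
`∏_{i ∈ B} l_i` over all subsets `B ⊆ {1,…,m}` has dimension equal to the number of subsets
`B` for which the forms `(l_i)_{i ∈ B}` are linearly independent, i.e. the Tutte evaluation
`T(𝒜; 2, 1)` of the corresponding central arrangement `𝒜`. -/
theorem wagner_dimension_formula {K : Type} [Field K] [CharZero K]
    {d m : ℕ} (v : Fin m → Fin d → K)
    (hv : ∀ i, v i ≠ 0)
    (hprop : ∀ i j, i ≠ j → ∀ c : K, v i ≠ c • v j) :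
    Module.finrank K
        ↥(Submodule.span K
          {P : MvPolynomial (Fin d) K | ∃ B : Finset (Fin m),
            P = ∏ i ∈ B, ∑ j, MvPolynomial.C (v i j) * MvPolynomial.X j})
      = Nat.card {B : Finset (Fin m) // LinearIndependent K (fun i : B => v ↑i)} := by
  haveI : Infinite K := CharZero.infinite K
  set a : Fin m → Module.Dual K (Fin d → K) := fun i => coordDual d (v i) with ha
  -- identify the two counts
  have hcount : Nat.card {B : Finset (Fin m) // LinearIndependent K (fun i : B => v ↑i)}
      = Nat.card {S : Finset (Fin m) // IndOn K a S} := by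
    refine nat_card_iff_congr (fun B => ?_)
    rw [indOn_iff_linearIndependent]
    constructor
    · intro h
      have h2 : LinearIndependent K ((coordDual d) ∘ (fun i : B => v ↑i)) :=
        h.map' (coordDual d) coordDual_ker
      exact h2
    · intro h
      exact LinearIndependent.of_comp (coordDual d) h
  -- identify the spans
  have hinj : Function.Injective (evalL d (K := K)) := by
    intro p q h
    apply MvPolynomial.funext
    intro x
    exact congrFun h x
  have himg : (Submodule.span K
      {P : MvPolynomial (Fin d) K | ∃ B : Finset (Fin m),
        P = ∏ i ∈ B, ∑ j, MvPolynomial.C (v i j) * MvPolynomial.X j}).map (evalL d)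
      = PP a := by
    rw [Submodule.map_span, PP]
    congr 1
    ext f
    constructor
    · rintro ⟨P, ⟨B, rfl⟩, rfl⟩
      refine ⟨B, ?_⟩
      funext x
      show pF a B x = MvPolynomial.eval x (∏ i ∈ B, ∑ j, MvPolynomial.C (v i j) * MvPolynomial.X j)
      rw [map_prod]
      refine Finset.prod_congr rfl fun i _ => ?_
      rw [coordDual_apply]
      simp
    · rintro ⟨B, rfl⟩
      refine ⟨∏ i ∈ B, ∑ j, MvPolynomial.C (v i j) * MvPolynomial.X j, ⟨B, rfl⟩, ?_⟩
      funext x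
      show MvPolynomial.eval x (∏ i ∈ B, ∑ j, MvPolynomial.C (v i j) * MvPolynomial.X j) = pF a B x
      rw [map_prod]
      refine Finset.prod_congr rfl fun i _ => ?_
      rw [coordDual_apply]
      simp
  have hfr : Module.finrank K
      ↥(Submodule.span K
        {P : MvPolynomial (Fin d) K | ∃ B : Finset (Fin m),
          P = ∏ i ∈ B, ∑ j, MvPolynomial.C (v i j) * MvPolynomial.X j})
      = Module.finrank K (PP a) := by
    rw [← himg]
    exact (Submodule.equivMapOfInjective _ hinj _).finrank_eq
  rw [hfr, hcount]
  exact main_aux ({i | a i ≠ 0}).ncard a (le_refl _)
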